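/- Let (Ω, Σ, μ) be a σ-finite measure space and let D : S₀(μ) → S₀(μ) be a ℂ-linear map satisfying D(fg) = D(f)g + fD(g) for all f, g ∈ S₀(μ). Then there exists a measurable set S ∈ Σ with μ(S) < ∞ such that for every f ∈ S₀(μ) the function D(f) vanishes μ-almost everywhere outside S, i.e. χ_S·D(f) = D(f) in S₀(μ) for all f ∈ S₀(μ). -/

import Mathlib

open MeasureTheory

/-- The algebra `S₀(μ)` of "τ-compact" elements of `L⁰(μ)`: (classes of) measurable
functions `f` with `μ {|f| ≥ ε} < ∞` for every `ε > 0`. -/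
def tauCompactSet {α : Type*} [MeasurableSpace α] (μ : Measure α) :
    Set (α →ₘ[μ] ℂ) :=
  {f | ∀ ε : ℝ, 0 < ε → μ {ω | ε ≤ ‖f ω‖} < ⊤}

namespace DerivSupport

variable {α : Type*} [MeasurableSpace α] {μ : Measure α}

lemma measure_level_congr {f g : α → ℂ} (h : f =ᵐ[μ] g) (ε : ℝ) :
    μ {ω | ε ≤ ‖f ω‖} = μ {ω | ε ≤ ‖g ω‖} :=
  measure_congr (h.mono fun ω hω => by
    change (ε ≤ ‖f ω‖) = (ε ≤ ‖g ω‖); rw [hω])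

lemma mem_iff_of_coeFn_ae {f : α →ₘ[μ] ℂ} {G : α → ℂ} (h : ⇑f =ᵐ[μ] G) :
    f ∈ tauCompactSet μ ↔ ∀ ε : ℝ, 0 < ε → μ {ω | ε ≤ ‖G ω‖} < ⊤ := by
  constructor
  · intro hf ε hε; rw [← measure_level_congr h ε]; exact hf ε hε
  · intro hf ε hε; rw [measure_level_congr h ε]; exact hf ε hε

lemma zero_mem : (0 : α →ₘ[μ] ℂ) ∈ tauCompactSet μ := by
  rw [mem_iff_of_coeFn_ae (AEEqFun.coeFn_zero (β := ℂ))]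
  intro ε hε
  have h0 : {ω : α | ε ≤ ‖(0 : α → ℂ) ω‖} = (∅ : Set α) := by
    ext ω; simpa using hε.not_ge
  rw [h0]; simp

lemma add_mem {f g : α →ₘ[μ] ℂ} (hf : f ∈ tauCompactSet μ) (hg : g ∈ tauCompactSet μ) :
    f + g ∈ tauCompactSet μ := by
  rw [mem_iff_of_coeFn_ae (AEEqFun.coeFn_add f g)]
  intro ε hε
  have hsub : {ω : α | ε ≤ ‖(⇑f + ⇑g) ω‖} ⊆
      {ω | ε / 2 ≤ ‖f ω‖} ∪ {ω | ε / 2 ≤ ‖g ω‖} := by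
    intro ω hω
    by_contra hcon
    simp only [Set.mem_union, Set.mem_setOf_eq, not_or, not_le] at hcon
    have : ‖f ω + g ω‖ < ε := by
      calc ‖f ω + g ω‖ ≤ ‖f ω‖ + ‖g ω‖ := norm_add_le _ _
        _ < ε / 2 + ε / 2 := add_lt_add hcon.1 hcon.2
        _ = ε := add_halves ε
    exact absurd hω (by simpa [Pi.add_apply] using this.not_ge)
  refine (measure_mono hsub).trans_lt ((measure_union_le _ _).trans_lt ?_)
  exact ENNReal.add_lt_top.mpr ⟨hf _ (half_pos hε), hg _ (half_pos hε)⟩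

lemma smul_mem (c : ℂ) {f : α →ₘ[μ] ℂ} (hf : f ∈ tauCompactSet μ) :
    c • f ∈ tauCompactSet μ := by
  rcases eq_or_ne c 0 with rfl | hc
  · have h0 : (0 : ℂ) • f = 0 := zero_smul ℂ f
    rw [h0]; exact zero_mem
  · rw [mem_iff_of_coeFn_ae (AEEqFun.coeFn_smul c f)]
    intro ε hε
    have hsub : {ω : α | ε ≤ ‖(c • ⇑f) ω‖} ⊆ {ω | ε / ‖c‖ ≤ ‖f ω‖} := by
      intro ω hω
      simp only [Set.mem_setOf_eq, Pi.smul_apply, norm_smul] at hω ⊢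
      rw [div_le_iff₀' (norm_pos_iff.mpr hc)]
      exact hω
    exact (measure_mono hsub).trans_lt (hf _ (div_pos hε (norm_pos_iff.mpr hc)))

lemma neg_mem {f : α →ₘ[μ] ℂ} (hf : f ∈ tauCompactSet μ) : -f ∈ tauCompactSet μ := by
  rw [← neg_one_smul ℂ f]; exact smul_mem _ hf

lemma sub_mem {f g : α →ₘ[μ] ℂ} (hf : f ∈ tauCompactSet μ) (hg : g ∈ tauCompactSet μ) :
    f - g ∈ tauCompactSet μ := by
  rw [sub_eq_add_neg]; exact add_mem hf (neg_mem hg)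

lemma mul_mem {f g : α →ₘ[μ] ℂ} (hf : f ∈ tauCompactSet μ) (hg : g ∈ tauCompactSet μ) :
    f * g ∈ tauCompactSet μ := by
  rw [mem_iff_of_coeFn_ae (AEEqFun.coeFn_mul f g)]
  intro ε hε
  have hε' : 0 < Real.sqrt ε := Real.sqrt_pos.mpr hε
  have hsub : {ω : α | ε ≤ ‖(⇑f * ⇑g) ω‖} ⊆
      {ω | Real.sqrt ε ≤ ‖f ω‖} ∪ {ω | Real.sqrt ε ≤ ‖g ω‖} := by
    intro ω hω
    by_contra hcon
    simp only [Set.mem_union, Set.mem_setOf_eq, not_or, not_le] at hcon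
    have : ‖f ω * g ω‖ < ε := by
      rw [norm_mul]
      calc ‖f ω‖ * ‖g ω‖ < Real.sqrt ε * Real.sqrt ε :=
            mul_lt_mul' hcon.1.le hcon.2 (norm_nonneg _) hε'
        _ = ε := Real.mul_self_sqrt hε.le
    exact absurd hω (by simpa [Pi.mul_apply] using this.not_ge)
  refine (measure_mono hsub).trans_lt ((measure_union_le _ _).trans_lt ?_)
  exact ENNReal.add_lt_top.mpr ⟨hf _ hε', hg _ hε'⟩

/-- The indicator of a finite-measure measurable set, as an element of `S₀`. -/
noncomputable def chi (μ : Measure α) {A : Set α} (hA : MeasurableSet A) : α →ₘ[μ] ℂ :=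
  AEEqFun.mk (A.indicator fun _ => (1 : ℂ)) (aestronglyMeasurable_const.indicator hA)

lemma coeFn_chi {A : Set α} (hA : MeasurableSet A) :
    ⇑(chi μ hA) =ᵐ[μ] A.indicator fun _ => (1 : ℂ) :=
  AEEqFun.coeFn_mk _ _

lemma chi_mem {A : Set α} (hA : MeasurableSet A) (hAfin : μ A < ⊤) :
    chi μ hA ∈ tauCompactSet μ := by
  rw [mem_iff_of_coeFn_ae (coeFn_chi hA)]
  intro ε hε
  have hsub : {ω : α | ε ≤ ‖A.indicator (fun _ => (1 : ℂ)) ω‖} ⊆ A := by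
    intro ω hω
    by_contra hωA
    simp only [Set.mem_setOf_eq, Set.indicator_of_notMem hωA, norm_zero] at hω
    exact hε.not_ge hω
  exact (measure_mono hsub).trans_lt hAfin

lemma chi_mul_chi {A : Set α} (hA : MeasurableSet A) : chi μ hA * chi μ hA = chi μ hA := by
  unfold chi
  rw [AEEqFun.mk_mul_mk]
  congr 1
  funext ω
  by_cases hω : ω ∈ A <;> simp [hω]

lemma sum_mem {ι : Type*} (s : Finset ι) (u : ι → α →ₘ[μ] ℂ)
    (hu : ∀ i ∈ s, u i ∈ tauCompactSet μ) : (∑ i ∈ s, u i) ∈ tauCompactSet μ := by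
  classical
  induction s using Finset.induction_on with
  | empty => simpa using zero_mem (μ := μ)
  | insert _ _ hni ih =>
    rw [Finset.sum_insert hni]
    exact add_mem (hu _ (Finset.mem_insert_self _ _))
      (ih fun i hi => hu i (Finset.mem_insert_of_mem hi))

lemma coeFn_sum {ι : Type*} (s : Finset ι) (u : ι → α →ₘ[μ] ℂ) :
    ⇑(∑ i ∈ s, u i) =ᵐ[μ] fun ω => ∑ i ∈ s, u i ω := by
  classical
  induction s using Finset.induction_on with
  | empty =>
    simp only [Finset.sum_empty]
    filter_upwards [(AEEqFun.coeFn_zero : ⇑(0 : α →ₘ[μ] ℂ) =ᵐ[μ] 0)] with ω h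
    simpa using h
  | @insert a s hni ih =>
    rw [Finset.sum_insert hni]
    filter_upwards [AEEqFun.coeFn_add (u a) (∑ i ∈ s, u i), ih] with ω h1 h2
    rw [h1, Pi.add_apply, h2]
    simp [Finset.sum_insert hni]

lemma smul_zero' (c : ℂ) : c • (0 : α →ₘ[μ] ℂ) = 0 := by
  apply AEEqFun.ext
  filter_upwards [AEEqFun.coeFn_smul c (0 : α →ₘ[μ] ℂ),
    (AEEqFun.coeFn_zero : ⇑(0 : α →ₘ[μ] ℂ) =ᵐ[μ] 0)] with ω h1 h2
  rw [h1, Pi.smul_apply, h2]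
  simp

lemma zero_mul' (a : α →ₘ[μ] ℂ) : (0 : α →ₘ[μ] ℂ) * a = 0 := by
  apply AEEqFun.ext
  filter_upwards [AEEqFun.coeFn_mul 0 a, (AEEqFun.coeFn_zero : ⇑(0 : α →ₘ[μ] ℂ) =ᵐ[μ] 0)]
    with ω h1 h2
  simp [h1, h2]

lemma mul_add' (a b c : α →ₘ[μ] ℂ) : a * (b + c) = a * b + a * c := by
  apply AEEqFun.ext
  filter_upwards [AEEqFun.coeFn_mul a (b + c), AEEqFun.coeFn_add b c,
    AEEqFun.coeFn_add (a * b) (a * c), AEEqFun.coeFn_mul a b, AEEqFun.coeFn_mul a c]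
    with ω h1 h2 h3 h4 h5
  simp only [h1, h3, Pi.mul_apply, Pi.add_apply, h2, h4, h5]
  ring

lemma sum_mul' {ι : Type*} (s : Finset ι) (u : ι → α →ₘ[μ] ℂ) (a : α →ₘ[μ] ℂ) :
    (∑ i ∈ s, u i) * a = ∑ i ∈ s, u i * a := by
  classical
  induction s using Finset.induction_on with
  | empty => simpa using zero_mul' a
  | @insert b s hni ih =>
    rw [Finset.sum_insert hni, Finset.sum_insert hni, mul_comm, mul_add', mul_comm a, ← ih,
      mul_comm a]

section D

variable (D : (α →ₘ[μ] ℂ) → (α →ₘ[μ] ℂ))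

lemma D_zero (hD_add : ∀ f ∈ tauCompactSet μ, ∀ g ∈ tauCompactSet μ, D (f + g) = D f + D g) :
    D 0 = 0 := by
  have h := hD_add 0 zero_mem 0 zero_mem
  rw [add_zero] at h
  exact add_eq_right.mp h.symm

lemma D_sub
    (hD_add : ∀ f ∈ tauCompactSet μ, ∀ g ∈ tauCompactSet μ, D (f + g) = D f + D g)
    (hD_smul : ∀ (c : ℂ), ∀ f ∈ tauCompactSet μ, D (c • f) = c • D f)
    {f g : α →ₘ[μ] ℂ} (hf : f ∈ tauCompactSet μ) (hg : g ∈ tauCompactSet μ) :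
    D (f - g) = D f - D g := by
  have h1 : f - g = f + (-1 : ℂ) • g := by rw [neg_one_smul ℂ g, sub_eq_add_neg]
  rw [h1, hD_add f hf ((-1 : ℂ) • g) (smul_mem _ hg), hD_smul (-1) g hg, neg_one_smul ℂ (D g),
    ← sub_eq_add_neg]

lemma D_chi_eq_zero
    (hD_leibniz : ∀ f ∈ tauCompactSet μ, ∀ g ∈ tauCompactSet μ,
      D (f * g) = D f * g + f * D g)
    {A : Set α} (hA : MeasurableSet A) (hAfin : μ A < ⊤) :
    D (chi μ hA) = 0 := by
  set x := chi μ hA with hx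
  have hxT : x ∈ tauCompactSet μ := chi_mem hA hAfin
  have hmul : x * x = x := chi_mul_chi hA
  have h : D x = D x * x + x * D x := by
    conv_lhs => rw [← hmul]
    exact hD_leibniz x hxT x hxT
  have h1 : D x = x * D x + x * D x := h.trans (by rw [mul_comm (D x) x])
  have h2 : x * D x = x * D x + x * D x := by
    calc x * D x = x * (x * D x + x * D x) := by rw [← h1]
      _ = x * x * D x + x * x * D x := by
          rw [mul_add', ← mul_assoc]
      _ = x * D x + x * D x := by rw [hmul]
  have h3 : x * D x = 0 := add_eq_right.mp h2.symm
  rw [h1, h3, add_zero]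

lemma D_chi_mul
    (hD_leibniz : ∀ f ∈ tauCompactSet μ, ∀ g ∈ tauCompactSet μ,
      D (f * g) = D f * g + f * D g)
    {A : Set α} (hA : MeasurableSet A) (hAfin : μ A < ⊤)
    {f : α →ₘ[μ] ℂ} (hf : f ∈ tauCompactSet μ) :
    D (chi μ hA * f) = chi μ hA * D f := by
  rw [hD_leibniz _ (chi_mem hA hAfin) f hf, D_chi_eq_zero D hD_leibniz hA hAfin, zero_mul',
    zero_add]

lemma D_sum
    (hD_add : ∀ f ∈ tauCompactSet μ, ∀ g ∈ tauCompactSet μ, D (f + g) = D f + D g)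
    (hD_smul : ∀ (c : ℂ), ∀ f ∈ tauCompactSet μ, D (c • f) = c • D f)
    {ι : Type*} (s : Finset ι) (u : ι → α →ₘ[μ] ℂ)
    (hu : ∀ i ∈ s, u i ∈ tauCompactSet μ) :
    D (∑ i ∈ s, u i) = ∑ i ∈ s, D (u i) := by
  classical
  induction s using Finset.induction_on with
  | empty => simpa using D_zero D hD_add
  | @insert a s hni ih =>
    rw [Finset.sum_insert hni, Finset.sum_insert hni,
      hD_add _ (hu a (Finset.mem_insert_self _ _)) _
        (sum_mem s u fun i hi => hu i (Finset.mem_insert_of_mem hi)),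
      ih fun i hi => hu i (Finset.mem_insert_of_mem hi)]

/-- Key approximation step: given `f ∈ S₀` and a finite-measure set `C`, there is a
function `G` supported in `C`, bounded by `η`, with `D (mk G) = χ_{C'} · D f` for a
subset `C' ⊆ C` of at least half the measure. -/
lemma approx
    (hD_add : ∀ f ∈ tauCompactSet μ, ∀ g ∈ tauCompactSet μ, D (f + g) = D f + D g)
    (hD_smul : ∀ (c : ℂ), ∀ f ∈ tauCompactSet μ, D (c • f) = c • D f)
    (hD_leibniz : ∀ f ∈ tauCompactSet μ, ∀ g ∈ tauCompactSet μ,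
      D (f * g) = D f * g + f * D g)
    {f : α →ₘ[μ] ℂ} (hf : f ∈ tauCompactSet μ)
    {C : Set α} (hC : MeasurableSet C) (hCfin : μ C < ⊤) {η : ℝ} (hη : 0 < η) :
    ∃ (G : α → ℂ) (hG : Measurable G) (C' : Set α) (hC' : MeasurableSet C'),
      C' ⊆ C ∧ μ C ≤ 2 * μ C' ∧
      (∀ ω, ω ∉ C → G ω = 0) ∧ (∀ ω, ‖G ω‖ ≤ η) ∧
      D (AEEqFun.mk G hG.aestronglyMeasurable) = chi μ hC' * D f := by
  classical
  set fc : α → ℂ := ⇑f with hfc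
  have hfc_meas : Measurable fc := f.measurable
  set q : ℕ → ℂ := TopologicalSpace.denseSeq ℂ with hqdef
  have hq : DenseRange q := TopologicalSpace.denseRange_denseSeq ℂ
  set V : ℕ → Set ℂ := fun i => Metric.ball (q i) η with hV
  set W : ℕ → Set ℂ := disjointed V with hW
  have hWmeas : ∀ i, MeasurableSet (W i) :=
    MeasurableSet.disjointed fun i => measurableSet_ball
  set P : ℕ → Set α := fun i => C ∩ fc ⁻¹' W i with hP
  have hPmeas : ∀ i, MeasurableSet (P i) := fun i => hC.inter (hfc_meas (hWmeas i))
  have hPfin : ∀ i, μ (P i) < ⊤ := fun i =>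
    (measure_mono Set.inter_subset_left).trans_lt hCfin
  have hPdisj : Pairwise (Function.onFun Disjoint P) := fun i j hij =>
    Disjoint.mono Set.inter_subset_right Set.inter_subset_right
      (((disjoint_disjointed V) hij).preimage fc)
  have hPunion : (⋃ i, P i) = C := by
    have hWuniv : (⋃ i, W i) = Set.univ := by
      rw [hW, iUnion_disjointed]
      ext z
      simp only [Set.mem_iUnion, Set.mem_univ, iff_true]
      obtain ⟨i, hi⟩ := hq.exists_dist_lt z hη
      exact ⟨i, Metric.mem_ball.mpr hi⟩
    have h1 : (⋃ i, P i) = C ∩ fc ⁻¹' (⋃ i, W i) := by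
      rw [Set.preimage_iUnion, Set.inter_iUnion]
    rw [h1, hWuniv, Set.preimage_univ, Set.inter_univ]
  have hsum : ∑' i, μ (P i) = μ C := by
    rw [← measure_iUnion hPdisj hPmeas, hPunion]
  obtain ⟨N, hN⟩ : ∃ N, μ C ≤ 2 * ∑ i ∈ Finset.range N, μ (P i) := by
    rcases eq_or_ne (μ C) 0 with h0 | h0
    · exact ⟨0, by simp [h0]⟩
    · have hhalf : μ C / 2 < ∑' i, μ (P i) := by
        rw [hsum]; exact ENNReal.half_lt_self h0 hCfin.ne
      rw [ENNReal.tsum_eq_iSup_nat] at hhalf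
      obtain ⟨N, hN⟩ := lt_iSup_iff.mp hhalf
      refine ⟨N, ?_⟩
      calc μ C = μ C / 2 + μ C / 2 := (ENNReal.add_halves _).symm
        _ ≤ (∑ i ∈ Finset.range N, μ (P i)) + ∑ i ∈ Finset.range N, μ (P i) :=
            add_le_add hN.le hN.le
        _ = 2 * ∑ i ∈ Finset.range N, μ (P i) := (two_mul _).symm
  set C' : Set α := ⋃ i ∈ Finset.range N, P i with hC'def
  have hC'meas : MeasurableSet C' :=
    Finset.measurableSet_biUnion _ fun i _ => hPmeas i
  have hC'sub : C' ⊆ C := Set.iUnion₂_subset fun i _ => Set.inter_subset_left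
  have hC'ge : μ C ≤ 2 * μ C' := by
    refine hN.trans ?_
    rw [← measure_biUnion_finset (fun i _ j _ hij => hPdisj hij) fun i _ => hPmeas i]
  set G : α → ℂ := fun ω => ∑ i ∈ Finset.range N, (P i).indicator (fun ω' => fc ω' - q i) ω
    with hGdef
  have hGmeas : Measurable G :=
    Finset.measurable_sum _ fun i _ =>
      ((hfc_meas.sub measurable_const).indicator (hPmeas i))
  have hGae : AEStronglyMeasurable G μ := hGmeas.aestronglyMeasurable
  have hGoff : ∀ ω, ω ∉ C → G ω = 0 := fun ω hω =>
    Finset.sum_eq_zero fun i _ => Set.indicator_of_notMem (fun hP => hω hP.1) _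
  have hkey : ∀ ω, ∀ i ∈ Finset.range N, ω ∈ P i → G ω = fc ω - q i := by
    intro ω i hiN hωi
    show (∑ j ∈ Finset.range N, (P j).indicator (fun ω' => fc ω' - q j) ω) = fc ω - q i
    rw [Finset.sum_eq_single_of_mem i hiN ?_, Set.indicator_of_mem hωi]
    intro j hj hji
    refine Set.indicator_of_notMem (fun hωj => ?_) _
    exact (Set.disjoint_left.mp (hPdisj hji) hωj) hωi
  have hGbound : ∀ ω, ‖G ω‖ ≤ η := by
    intro ω
    by_cases hωC' : ∃ i ∈ Finset.range N, ω ∈ P i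
    · obtain ⟨i, hiN, hωi⟩ := hωC'
      rw [hkey ω i hiN hωi]
      have hball : fc ω ∈ V i := disjointed_subset V i hωi.2
      have hd := Metric.mem_ball.mp hball
      rw [dist_eq_norm] at hd
      exact hd.le
    · push_neg at hωC'
      have hz : G ω = 0 := Finset.sum_eq_zero fun i hi => Set.indicator_of_notMem (hωC' i hi) _
      rw [hz, norm_zero]; exact hη.le
  set u : ℕ → α →ₘ[μ] ℂ := fun i => chi μ (hPmeas i) * f - q i • chi μ (hPmeas i) with hu
  have huT : ∀ i, u i ∈ tauCompactSet μ := fun i =>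
    sub_mem (mul_mem (chi_mem (hPmeas i) (hPfin i)) hf)
      (smul_mem _ (chi_mem (hPmeas i) (hPfin i)))
  have hu_coe : ∀ i, ⇑(u i) =ᵐ[μ] (P i).indicator fun ω' => fc ω' - q i := by
    intro i
    filter_upwards [AEEqFun.coeFn_sub (chi μ (hPmeas i) * f) (q i • chi μ (hPmeas i)),
      AEEqFun.coeFn_mul (chi μ (hPmeas i)) f, AEEqFun.coeFn_smul (q i) (chi μ (hPmeas i)),
      coeFn_chi (hPmeas i)] with ω h1 h2 h3 h4
    rw [hu]
    simp only [h1, Pi.sub_apply, h2, Pi.mul_apply, h3, Pi.smul_apply, h4, smul_eq_mul]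
    by_cases hω : ω ∈ P i
    · simp [Set.indicator_of_mem hω, hfc]
    · simp [Set.indicator_of_notMem hω]
  have hmkG : AEEqFun.mk G hGae = ∑ i ∈ Finset.range N, u i := by
    apply AEEqFun.ext
    filter_upwards [AEEqFun.coeFn_mk G hGae, coeFn_sum (Finset.range N) u,
      ae_all_iff.mpr hu_coe] with ω h1 h2 h3
    rw [h1, h2]
    exact (Finset.sum_congr rfl fun i _ => h3 i).symm
  have hchisum : (∑ i ∈ Finset.range N, chi μ (hPmeas i)) = chi μ hC'meas := by
    apply AEEqFun.ext
    have hallchi : ∀ᵐ ω ∂μ, ∀ i, (chi μ (hPmeas i)) ω = (P i).indicator (fun _ => (1 : ℂ)) ω :=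
      ae_all_iff.mpr fun i => coeFn_chi (hPmeas i)
    filter_upwards [coeFn_sum (Finset.range N) fun i => chi μ (hPmeas i), hallchi,
      coeFn_chi hC'meas] with ω h1 h2 h3
    rw [h1, h3, Finset.sum_congr rfl fun i _ => h2 i]
    by_cases hω : ω ∈ C'
    · obtain ⟨i, hiN, hωi⟩ := Set.mem_iUnion₂.mp hω
      rw [Finset.sum_eq_single_of_mem i hiN ?_, Set.indicator_of_mem hωi,
        Set.indicator_of_mem hω]
      intro j hj hji
      exact Set.indicator_of_notMem
        (fun hωj => (Set.disjoint_left.mp (hPdisj hji) hωj) hωi) _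
    · rw [Set.indicator_of_notMem hω, Finset.sum_eq_zero]
      intro i hiN
      exact Set.indicator_of_notMem
        (fun hωi => hω (Set.mem_iUnion₂.mpr ⟨i, hiN, hωi⟩)) _
  have hDu : ∀ i ∈ Finset.range N, D (u i) = chi μ (hPmeas i) * D f := by
    intro i _
    rw [hu]
    rw [D_sub D hD_add hD_smul (mul_mem (chi_mem (hPmeas i) (hPfin i)) hf)
        (smul_mem _ (chi_mem (hPmeas i) (hPfin i))),
      D_chi_mul D hD_leibniz (hPmeas i) (hPfin i) hf,
      hD_smul (q i) _ (chi_mem (hPmeas i) (hPfin i)),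
      D_chi_eq_zero D hD_leibniz (hPmeas i) (hPfin i), smul_zero', sub_zero]
  have hDG : D (AEEqFun.mk G hGae) = chi μ hC'meas * D f := by
    rw [hmkG, D_sum D hD_add hD_smul (Finset.range N) u (fun i _ => huT i), Finset.sum_congr rfl hDu,
      ← sum_mul', hchisum]
  exact ⟨G, hGmeas, C', hC'meas, hC'sub, hC'ge, hGoff, hGbound, hDG⟩


/-- Core contradiction: the union of the supports of the `D (g n)` cannot have infinite
measure. -/
lemma core
    (hD_maps : ∀ f ∈ tauCompactSet μ, D f ∈ tauCompactSet μ)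
    (hD_add : ∀ f ∈ tauCompactSet μ, ∀ g ∈ tauCompactSet μ, D (f + g) = D f + D g)
    (hD_smul : ∀ (c : ℂ), ∀ f ∈ tauCompactSet μ, D (c • f) = c • D f)
    (hD_leibniz : ∀ f ∈ tauCompactSet μ, ∀ g ∈ tauCompactSet μ,
      D (f * g) = D f * g + f * D g)
    (g : ℕ → α →ₘ[μ] ℂ) (hg : ∀ n, g n ∈ tauCompactSet μ)
    (hμtop : μ (⋃ n, {ω | (D (g n)) ω ≠ 0}) = ⊤) : False := by
  classical
  obtain ⟨e⟩ : Nonempty (ℕ ≃ ℕ × ℕ) := ⟨(Denumerable.eqv (ℕ × ℕ)).symm⟩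
  set ε : ℕ → ℝ := fun j => 1 / ((e j).2 + 1) with hεdef
  have hεpos : ∀ j, 0 < ε j := fun j => by positivity
  set B : ℕ → Set α := fun j => {ω | ε j ≤ ‖(D (g (e j).1)) ω‖} with hBdef
  have hBmeas : ∀ j, MeasurableSet (B j) :=
    fun j => measurableSet_le measurable_const ((D (g (e j).1)).measurable.norm)
  have hBfin : ∀ j, μ (B j) < ⊤ := fun j => hD_maps _ (hg _) _ (hεpos j)
  have hBunion : (⋃ j, B j) = ⋃ n, {ω | (D (g n)) ω ≠ 0} := by
    ext ω
    simp only [Set.mem_iUnion, Set.mem_setOf_eq]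
    constructor
    · rintro ⟨j, hj⟩
      refine ⟨(e j).1, fun h0 => ?_⟩
      have hj' : ε j ≤ ‖(D (g (e j).1)) ω‖ := hj
      rw [h0, norm_zero] at hj'
      exact absurd hj' (hεpos j).not_ge
    · rintro ⟨n, hn⟩
      have hpos : 0 < ‖(D (g n)) ω‖ := norm_pos_iff.mpr hn
      obtain ⟨k, hk⟩ := exists_nat_one_div_lt hpos
      refine ⟨e.symm (n, k), ?_⟩
      show ε (e.symm (n, k)) ≤ ‖(D (g (e (e.symm (n, k))).1)) ω‖
      rw [e.apply_symm_apply]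
      have hεe : ε (e.symm (n, k)) = 1 / ((k : ℝ) + 1) := by
        show (1 : ℝ) / (((e (e.symm (n, k))).2 : ℝ) + 1) = 1 / ((k : ℝ) + 1)
        rw [e.apply_symm_apply]
      rw [hεe]
      exact hk.le
  set Cs : ℕ → Set α := disjointed B with hCsdef
  have hCmeas : ∀ j, MeasurableSet (Cs j) := MeasurableSet.disjointed hBmeas
  have hCdisj : Pairwise (Function.onFun Disjoint Cs) := disjoint_disjointed B
  have hCsub : ∀ j, Cs j ⊆ B j := disjointed_subset B
  have hCfin : ∀ j, μ (Cs j) < ⊤ := fun j => (measure_mono (hCsub j)).trans_lt (hBfin j)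
  have hCsum : ∑' j, μ (Cs j) = ⊤ := by
    rw [← measure_iUnion hCdisj hCmeas]
    show μ (⋃ j, disjointed B j) = ⊤
    rw [iUnion_disjointed, hBunion, hμtop]
  have hCbound : ∀ j ω, ω ∈ Cs j → ε j ≤ ‖(D (g (e j).1)) ω‖ := fun j ω hω => hCsub j hω
  -- approximation for each j
  have happrox := fun j => approx D hD_add hD_smul hD_leibniz (hg (e j).1) (hCmeas j)
    (hCfin j) (η := ε j * (1 / 2) ^ j) (by positivity)
  choose G hGmeas C' hC'meas hC'sub hC'half hGoff hGbound hDG using happrox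
  have hC'disj : Pairwise (Function.onFun Disjoint C') := fun i j hij =>
    (hCdisj hij).mono (hC'sub i) (hC'sub j)
  set c : ℕ → ℂ := fun j => ((ε j)⁻¹ : ℝ) with hcdef
  have hcnorm : ∀ j, ‖c j‖ = (ε j)⁻¹ := fun j => by
    show ‖(((ε j)⁻¹ : ℝ) : ℂ)‖ = (ε j)⁻¹
    rw [Complex.norm_real, Real.norm_eq_abs, abs_of_nonneg (inv_nonneg.mpr (hεpos j).le)]
  set Gs : ℕ → α → ℂ := fun j ω => c j * G j ω with hGsdef
  have hGsmeas : ∀ j, Measurable (Gs j) := fun j => (hGmeas j).const_mul (c j)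
  have hGsoff : ∀ j ω, ω ∉ Cs j → Gs j ω = 0 := fun j ω hω => by
    show c j * G j ω = 0
    rw [hGoff j ω hω, mul_zero]
  have hGsbound : ∀ j ω, ‖Gs j ω‖ ≤ (1 / 2) ^ j := fun j ω => by
    show ‖c j * G j ω‖ ≤ (1 / 2) ^ j
    calc ‖c j * G j ω‖ = (ε j)⁻¹ * ‖G j ω‖ := by rw [norm_mul, hcnorm j]
      _ ≤ (ε j)⁻¹ * (ε j * (1 / 2) ^ j) :=
          mul_le_mul_of_nonneg_left (hGbound j ω) (inv_nonneg.mpr (hεpos j).le)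
      _ = (1 / 2) ^ j := by
          rw [← mul_assoc, inv_mul_cancel₀ (hεpos j).ne', one_mul]
  -- the global function F
  set F : α → ℂ := fun ω => ∑' j, Gs j ω with hFdef
  have hFin : ∀ j ω, ω ∈ Cs j → F ω = Gs j ω := by
    intro j ω hω
    show (∑' i, Gs i ω) = Gs j ω
    exact tsum_eq_single j fun i hij =>
      hGsoff i ω fun hωi => (Set.disjoint_left.mp (hCdisj hij) hωi) hω
  have hFout : ∀ ω, ω ∉ (⋃ j, Cs j) → F ω = 0 := by
    intro ω hω
    show (∑' i, Gs i ω) = 0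
    have hz : ∀ i, Gs i ω = 0 := fun i =>
      hGsoff i ω fun hωi => hω (Set.mem_iUnion.mpr ⟨i, hωi⟩)
    simp [hz]
  have hFmeas : Measurable F := by
    apply measurable_of_tendsto_metrizable
      (f := fun n ω => ∑ j ∈ Finset.range n, Gs j ω)
      (fun n => Finset.measurable_sum _ fun j _ => hGsmeas j)
    rw [tendsto_pi_nhds]
    intro ω
    by_cases hω : ∃ j, ω ∈ Cs j
    · obtain ⟨j, hωj⟩ := hω
      apply tendsto_atTop_of_eventually_const (i₀ := j + 1)
      intro n hn
      rw [hFin j ω hωj]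
      exact Finset.sum_eq_single_of_mem j (Finset.mem_range.mpr hn) fun i _ hij =>
        hGsoff i ω fun hωi => (Set.disjoint_left.mp (hCdisj hij) hωi) hωj
    · push_neg at hω
      have hz : ∀ i, Gs i ω = 0 := fun i => hGsoff i ω (hω i)
      have hF0 : F ω = 0 := hFout ω (by simpa [Set.mem_iUnion] using hω)
      apply tendsto_atTop_of_eventually_const (i₀ := 0)
      intro n _
      rw [hF0]
      exact Finset.sum_eq_zero fun i _ => hz i
  have hFae : AEStronglyMeasurable F μ := hFmeas.aestronglyMeasurable
  have hFT : AEEqFun.mk F hFae ∈ tauCompactSet μ := by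
    rw [mem_iff_of_coeFn_ae (AEEqFun.coeFn_mk F hFae)]
    intro δ hδ
    obtain ⟨J, hJ⟩ : ∃ J : ℕ, ((1 : ℝ) / 2) ^ J < δ :=
      exists_pow_lt_of_lt_one hδ (by norm_num)
    have hsub : {ω | δ ≤ ‖F ω‖} ⊆ ⋃ j ∈ Finset.range J, Cs j := by
      intro ω hω
      simp only [Set.mem_setOf_eq] at hω
      by_cases hωC : ∃ j, ω ∈ Cs j
      · obtain ⟨j, hωj⟩ := hωC
        have hjJ : j < J := by
          by_contra hjJ
          push_neg at hjJ
          have h1 : ‖F ω‖ ≤ (1 / 2 : ℝ) ^ j := by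
            rw [hFin j ω hωj]; exact hGsbound j ω
          have h2 : ((1 : ℝ) / 2) ^ j ≤ (1 / 2) ^ J :=
            pow_le_pow_of_le_one (by norm_num) (by norm_num) hjJ
          linarith
        exact Set.mem_iUnion₂.mpr ⟨j, Finset.mem_range.mpr hjJ, hωj⟩
      · push_neg at hωC
        have h0 : F ω = 0 := hFout ω (by simpa [Set.mem_iUnion] using hωC)
        rw [h0, norm_zero] at hω
        linarith
    refine (measure_mono hsub).trans_lt ((measure_biUnion_finset_le _ _).trans_lt ?_)
    exact ENNReal.sum_lt_top.mpr fun j _ => hCfin j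
  have hGsae : ∀ j, AEStronglyMeasurable (Gs j) μ := fun j => (hGsmeas j).aestronglyMeasurable
  have hGqT : ∀ j, AEEqFun.mk (Gs j) (hGsae j) ∈ tauCompactSet μ := by
    intro j
    rw [mem_iff_of_coeFn_ae (AEEqFun.coeFn_mk _ _)]
    intro δ hδ
    have hsub : {ω | δ ≤ ‖Gs j ω‖} ⊆ Cs j := by
      intro ω hω
      by_contra hωC
      rw [Set.mem_setOf_eq, hGsoff j ω hωC, norm_zero] at hω
      exact hδ.not_ge hω
    exact (measure_mono hsub).trans_lt (hCfin j)
  have hGkT : ∀ j, AEEqFun.mk (G j) (hGmeas j).aestronglyMeasurable ∈ tauCompactSet μ := by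
    intro j
    rw [mem_iff_of_coeFn_ae (AEEqFun.coeFn_mk _ _)]
    intro δ hδ
    have hsub : {ω | δ ≤ ‖G j ω‖} ⊆ Cs j := by
      intro ω hω
      by_contra hωC
      rw [Set.mem_setOf_eq, hGoff j ω hωC, norm_zero] at hω
      exact hδ.not_ge hω
    exact (measure_mono hsub).trans_lt (hCfin j)
  have hGq_eq : ∀ j, AEEqFun.mk (Gs j) (hGsae j)
      = c j • AEEqFun.mk (G j) (hGmeas j).aestronglyMeasurable := by
    intro j
    rw [AEEqFun.smul_mk]
    apply AEEqFun.ext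
    filter_upwards [AEEqFun.coeFn_mk (Gs j) (hGsae j),
      AEEqFun.coeFn_mk (c j • G j) (((hGmeas j).aestronglyMeasurable).const_smul _)]
      with ω k1 k2
    rw [k1, k2, Pi.smul_apply, smul_eq_mul]
  have hDGq : ∀ j, D (AEEqFun.mk (Gs j) (hGsae j))
      = c j • (chi μ (hC'meas j) * D (g (e j).1)) := by
    intro j
    rw [hGq_eq j, hD_smul (c j) _ (hGkT j), hDG j]
  have hlocal : ∀ j, chi μ (hCmeas j) * D (AEEqFun.mk F hFae)
      = chi μ (hCmeas j) * D (AEEqFun.mk (Gs j) (hGsae j)) := by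
    intro j
    rw [← D_chi_mul D hD_leibniz (hCmeas j) (hCfin j) hFT,
      ← D_chi_mul D hD_leibniz (hCmeas j) (hCfin j) (hGqT j)]
    congr 1
    apply AEEqFun.ext
    filter_upwards [AEEqFun.coeFn_mul (chi μ (hCmeas j)) (AEEqFun.mk F hFae),
      AEEqFun.coeFn_mul (chi μ (hCmeas j)) (AEEqFun.mk (Gs j) (hGsae j)),
      coeFn_chi (hCmeas j), AEEqFun.coeFn_mk F hFae,
      AEEqFun.coeFn_mk (Gs j) (hGsae j)] with ω k1 k2 k3 k4 k5
    rw [k1, k2, Pi.mul_apply, Pi.mul_apply, k3, k4, k5]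
    by_cases hω : ω ∈ Cs j
    · rw [Set.indicator_of_mem hω, hFin j ω hω]
    · rw [Set.indicator_of_notMem hω, zero_mul, zero_mul]
  have hfinal : ∀ j, ∀ᵐ ω ∂μ, ω ∈ C' j → (1 : ℝ) ≤ ‖(D (AEEqFun.mk F hFae)) ω‖ := by
    intro j
    have heq : chi μ (hCmeas j) * D (AEEqFun.mk F hFae)
        = chi μ (hCmeas j) * (c j • (chi μ (hC'meas j) * D (g (e j).1))) := by
      rw [hlocal j, hDGq j]
    have heq' : ⇑(chi μ (hCmeas j) * D (AEEqFun.mk F hFae))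
        = ⇑(chi μ (hCmeas j) * (c j • (chi μ (hC'meas j) * D (g (e j).1)))) := by rw [heq]
    filter_upwards [AEEqFun.coeFn_mul (chi μ (hCmeas j)) (D (AEEqFun.mk F hFae)),
      AEEqFun.coeFn_mul (chi μ (hCmeas j)) (c j • (chi μ (hC'meas j) * D (g (e j).1))),
      AEEqFun.coeFn_smul (c j) (chi μ (hC'meas j) * D (g (e j).1)),
      AEEqFun.coeFn_mul (chi μ (hC'meas j)) (D (g (e j).1)),
      coeFn_chi (hCmeas j), coeFn_chi (hC'meas j)] with ω k1 k2 k3 k4 k5 k6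
    intro hω
    have hωC : ω ∈ Cs j := hC'sub j hω
    have h := congrFun heq' ω
    rw [Pi.mul_apply] at k1 k2
    rw [k1, k2, k5, Set.indicator_of_mem hωC, one_mul, one_mul, k3, Pi.smul_apply, k4,
      Pi.mul_apply, k6, Set.indicator_of_mem hω, one_mul] at h
    rw [h, smul_eq_mul, norm_mul, hcnorm j]
    have hb := hCbound j ω hωC
    calc (1 : ℝ) = (ε j)⁻¹ * ε j := (inv_mul_cancel₀ (hεpos j).ne').symm
      _ ≤ (ε j)⁻¹ * ‖(D (g (e j).1)) ω‖ :=
          mul_le_mul_of_nonneg_left hb (inv_nonneg.mpr (hεpos j).le)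
  have hsum' : ∑' j, μ (C' j) = ⊤ := by
    have hle : ∑' j, μ (Cs j) ≤ 2 * ∑' j, μ (C' j) := by
      rw [← ENNReal.tsum_mul_left]
      exact ENNReal.tsum_le_tsum fun j => hC'half j
    rw [hCsum] at hle
    have h2 : (2 : ENNReal) * (∑' j, μ (C' j)) = ⊤ := top_le_iff.mp hle
    by_contra hne
    exact absurd h2 (ENNReal.mul_ne_top (by norm_num) hne)
  have hUnionC' : μ (⋃ j, C' j) = ⊤ := by
    rw [measure_iUnion hC'disj hC'meas]
    exact hsum'
  have hlevel : μ {ω | (1 : ℝ) ≤ ‖(D (AEEqFun.mk F hFae)) ω‖} < ⊤ :=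
    (hD_maps _ hFT) 1 one_pos
  have hmono : μ (⋃ j, C' j) ≤ μ {ω | (1 : ℝ) ≤ ‖(D (AEEqFun.mk F hFae)) ω‖} := by
    apply measure_mono_ae
    filter_upwards [ae_all_iff.mpr hfinal] with ω hω hmem
    obtain ⟨j, hj⟩ := Set.mem_iUnion.mp hmem
    exact hω j hj
  rw [hUnionC'] at hmono
  exact absurd hlevel (not_lt.mpr hmono)

/-- Combination lemma: given `u v ∈ S₀` with the support of `D v` of finite measure,
there is `h ∈ S₀` whose derivative's support a.e. contains both supports. -/
lemma combine
    (hD_add : ∀ f ∈ tauCompactSet μ, ∀ g ∈ tauCompactSet μ, D (f + g) = D f + D g)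
    (hD_smul : ∀ (c : ℂ), ∀ f ∈ tauCompactSet μ, D (c • f) = c • D f)
    (hD_leibniz : ∀ f ∈ tauCompactSet μ, ∀ g ∈ tauCompactSet μ,
      D (f * g) = D f * g + f * D g)
    {u v : α →ₘ[μ] ℂ} (hu : u ∈ tauCompactSet μ) (hv : v ∈ tauCompactSet μ)
    (hBmeas : MeasurableSet {ω | (D v) ω ≠ 0})
    (hBfin : μ {ω | (D v) ω ≠ 0} < ⊤) :
    ∃ h ∈ tauCompactSet μ,
      ∀ᵐ ω ∂μ, ((D u) ω ≠ 0 ∨ (D v) ω ≠ 0) → (D h) ω ≠ 0 := by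
  classical
  set B : Set α := {ω | (D v) ω ≠ 0} with hBdef
  refine ⟨u + chi μ hBmeas * (v - u),
    add_mem hu (mul_mem (chi_mem hBmeas hBfin) (sub_mem hv hu)), ?_⟩
  have hDh : D (u + chi μ hBmeas * (v - u)) = D u + chi μ hBmeas * (D v - D u) := by
    rw [hD_add u hu _ (mul_mem (chi_mem hBmeas hBfin) (sub_mem hv hu)),
      D_chi_mul D hD_leibniz hBmeas hBfin (sub_mem hv hu),
      D_sub D hD_add hD_smul hv hu]
  have hDh' : ⇑(D (u + chi μ hBmeas * (v - u)))
      = ⇑(D u + chi μ hBmeas * (D v - D u)) := by rw [hDh]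
  filter_upwards [AEEqFun.coeFn_add (D u) (chi μ hBmeas * (D v - D u)),
    AEEqFun.coeFn_mul (chi μ hBmeas) (D v - D u), coeFn_chi hBmeas,
    AEEqFun.coeFn_sub (D v) (D u)] with ω k1 k2 k3 k4
  intro hcase
  have hh : (D (u + chi μ hBmeas * (v - u))) ω
      = (D u) ω + B.indicator (fun _ => (1 : ℂ)) ω * ((D v) ω - (D u) ω) := by
    rw [congrFun hDh' ω, k1, Pi.add_apply, k2, Pi.mul_apply, k3, k4, Pi.sub_apply]
  by_cases hv0 : (D v) ω ≠ 0
  · have hωB : ω ∈ B := hv0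
    rw [hh, Set.indicator_of_mem hωB, one_mul]
    intro hc
    apply hv0
    have : (D u) ω + ((D v) ω - (D u) ω) = (D v) ω := by ring
    rw [this] at hc
    exact hc
  · have hωB : ω ∉ B := hv0
    push_neg at hv0
    rw [hh, Set.indicator_of_notMem hωB, zero_mul, add_zero]
    rcases hcase with hc | hc
    · exact hc
    · exact absurd hv0 hc

end D

end DerivSupport


open DerivSupport in
/-- The support of any derivation of `S₀(μ)` over a σ-finite measure space has finite
measure: there is a measurable set `S` with `μ S < ∞` such that `χ_S · D f = D f`
for every `f ∈ S₀(μ)`. -/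
theorem derivation_on_tauCompact_has_finite_support
    {α : Type*} [MeasurableSpace α] (μ : Measure α) [SigmaFinite μ]
    (D : (α →ₘ[μ] ℂ) → (α →ₘ[μ] ℂ))
    (hD_maps : ∀ f ∈ tauCompactSet μ, D f ∈ tauCompactSet μ)
    (hD_add : ∀ f ∈ tauCompactSet μ, ∀ g ∈ tauCompactSet μ, D (f + g) = D f + D g)
    (hD_smul : ∀ (c : ℂ), ∀ f ∈ tauCompactSet μ, D (c • f) = c • D f)
    (hD_leibniz : ∀ f ∈ tauCompactSet μ, ∀ g ∈ tauCompactSet μ,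
      D (f * g) = D f * g + f * D g) :
    ∃ S : Set α, ∃ hS : MeasurableSet S, μ S < ⊤ ∧
      ∀ f ∈ tauCompactSet μ,
        AEEqFun.mk (S.indicator fun _ => (1 : ℂ))
            (aestronglyMeasurable_const.indicator hS) * D f = D f := by
  classical
  have hspt_meas : ∀ h : α →ₘ[μ] ℂ, MeasurableSet {ω | (D h) ω ≠ 0} := by
    intro h
    have h1 : MeasurableSet (⇑(D h) ⁻¹' ({(0 : ℂ)}ᶜ)) :=
      (D h).measurable (measurableSet_singleton (0 : ℂ)).compl
    have h2 : {ω | (D h) ω ≠ 0} = ⇑(D h) ⁻¹' ({(0 : ℂ)}ᶜ) := by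
      ext ω; simp
    rw [h2]; exact h1
  set t := ⨆ f ∈ tauCompactSet μ, μ {ω | (D f) ω ≠ 0} with ht
  have hle_t : ∀ f ∈ tauCompactSet μ, μ {ω | (D f) ω ≠ 0} ≤ t := fun f hf =>
    le_iSup₂ (f := fun f (_ : f ∈ tauCompactSet μ) => μ {ω | (D f) ω ≠ 0}) f hf
  have htfin : t ≠ ⊤ := by
    intro htop
    have hex : ∀ n : ℕ, ∃ f, f ∈ tauCompactSet μ ∧ (n : ENNReal) < μ {ω | (D f) ω ≠ 0} := by
      intro n
      have h1 : (n : ENNReal) < t := by rw [htop]; exact ENNReal.natCast_lt_top n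
      have h2 := h1.trans_le (le_of_eq ht)
      simp only [lt_iSup_iff] at h2
      obtain ⟨f, hf, h⟩ := h2
      exact ⟨f, hf, h⟩
    choose gs hgT hglt using hex
    have htop2 : μ (⋃ n, {ω | (D (gs n)) ω ≠ 0}) = ⊤ := by
      by_contra hne
      obtain ⟨n, hn⟩ := ENNReal.exists_nat_gt hne
      have hle : (n : ENNReal) ≤ μ (⋃ n, {ω | (D (gs n)) ω ≠ 0}) :=
        ((hglt n).trans_le
          (measure_mono (Set.subset_iUnion (fun m => {ω | (D (gs m)) ω ≠ 0}) n))).le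
      exact absurd hle (not_le.mpr hn)
    exact core D hD_maps hD_add hD_smul hD_leibniz gs hgT htop2
  rcases eq_or_ne t 0 with ht0 | ht0
  · refine ⟨∅, MeasurableSet.empty, by simp, ?_⟩
    intro f hf
    have h0 : μ {ω | (D f) ω ≠ 0} = 0 :=
      le_antisymm ((hle_t f hf).trans (le_of_eq ht0)) (zero_le)
    apply AEEqFun.ext
    filter_upwards [AEEqFun.coeFn_mul
        (AEEqFun.mk ((∅ : Set α).indicator fun _ => (1 : ℂ))
          (aestronglyMeasurable_const.indicator MeasurableSet.empty)) (D f),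
      AEEqFun.coeFn_mk ((∅ : Set α).indicator fun _ => (1 : ℂ))
        (aestronglyMeasurable_const.indicator MeasurableSet.empty),
      measure_eq_zero_iff_ae_notMem.mp h0] with ω k1 k2 k3
    rw [k1, Pi.mul_apply, k2, Set.indicator_of_notMem (Set.notMem_empty ω), zero_mul]
    have : (D f) ω = 0 := not_not.mp k3
    rw [this]
  · -- t is positive and finite
    set δseq : ℕ → ENNReal := fun n => ((n + 1 : ℕ) : ENNReal)⁻¹ with hδseq
    have hδ0 : ∀ n, δseq n ≠ 0 := fun n =>
      ENNReal.inv_ne_zero.mpr (ENNReal.natCast_ne_top _)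
    have hfsex : ∀ n : ℕ, ∃ f, f ∈ tauCompactSet μ ∧
        t - δseq n < μ {ω | (D f) ω ≠ 0} := by
      intro n
      have hlt : t - δseq n < t := ENNReal.sub_lt_self htfin ht0 (hδ0 n)
      have h2 := hlt.trans_le (le_of_eq ht)
      simp only [lt_iSup_iff] at h2
      obtain ⟨f, hf, h⟩ := h2
      exact ⟨f, hf, h⟩
    choose fs hfsT hfslt using hfsex
    set S : Set α := ⋃ n, {ω | (D (fs n)) ω ≠ 0} with hSdef
    have hSmeas : MeasurableSet S := MeasurableSet.iUnion fun n => hspt_meas _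
    have hSfin : μ S < ⊤ := by
      rcases eq_or_ne (μ S) ⊤ with htop | hne
      · exact (core D hD_maps hD_add hD_smul hD_leibniz fs hfsT htop).elim
      · exact lt_top_iff_ne_top.mpr hne
    refine ⟨S, hSmeas, hSfin, ?_⟩
    intro f hf
    have hBfin : μ {ω | (D f) ω ≠ 0} < ⊤ :=
      (hle_t f hf).trans_lt (lt_top_iff_ne_top.mpr htfin)
    have hδ' : μ ({ω | (D f) ω ≠ 0} \ S) = 0 := by
      by_contra hδ'0
      set δ' := μ ({ω | (D f) ω ≠ 0} \ S) with hδ'def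
      have hδ'top : δ' ≠ ⊤ := ((measure_mono Set.diff_subset).trans_lt hBfin).ne
      have hδ''0 : min δ' t ≠ 0 := by
        simp only [ne_eq, min_eq_iff, not_or]
        constructor <;> intro hc
        · exact hδ'0 hc.1
        · exact ht0 hc.1
      obtain ⟨m, hm⟩ := ENNReal.exists_inv_nat_lt hδ''0
      have hδseqlt : δseq m < min δ' t := by
        refine lt_of_le_of_lt ?_ hm
        exact ENNReal.inv_le_inv.mpr (by exact_mod_cast Nat.le_succ m)
      obtain ⟨h, hhT, hh⟩ := combine D hD_add hD_smul hD_leibniz (hfsT m) hf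
        (hspt_meas f) hBfin
      have hdisj : Disjoint {ω | (D (fs m)) ω ≠ 0} ({ω | (D f) ω ≠ 0} \ S) := by
        refine Disjoint.mono ?_ ?_ (disjoint_compl_right (a := S))
        · exact Set.subset_iUnion (fun n => {ω | (D (fs n)) ω ≠ 0}) m
        · intro ω hω; exact hω.2
      have hunion : μ ({ω | (D (fs m)) ω ≠ 0} ∪ ({ω | (D f) ω ≠ 0} \ S))
          = μ {ω | (D (fs m)) ω ≠ 0} + δ' :=
        measure_union hdisj ((hspt_meas f).diff hSmeas)
      have hmeasle : μ ({ω | (D (fs m)) ω ≠ 0} ∪ ({ω | (D f) ω ≠ 0} \ S))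
          ≤ μ {ω | (D h) ω ≠ 0} := by
        apply measure_mono_ae
        filter_upwards [hh] with ω hω hmem
        rcases hmem with hc | hc
        · exact hω (Or.inl hc)
        · exact hω (Or.inr hc.1)
      have hchain : μ {ω | (D (fs m)) ω ≠ 0} + δ' ≤ t := by
        rw [← hunion]
        exact hmeasle.trans (hle_t h hhT)
      have hA : t - δseq m + δ' < t :=
        lt_of_lt_of_le (ENNReal.add_lt_add_right hδ'top (hfslt m)) hchain
      have hAfin : t - δseq m ≠ ⊤ := (tsub_le_self.trans_lt (lt_top_iff_ne_top.mpr htfin)).ne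
      have ht' : t = (t - δseq m) + δseq m :=
        (tsub_add_cancel_of_le (hδseqlt.le.trans (min_le_right _ _))).symm
      have hA2 : t - δseq m + δ' < (t - δseq m) + δseq m := hA.trans_le (le_of_eq ht')
      have hlt1 : δ' < δseq m := (ENNReal.add_lt_add_iff_left hAfin).mp hA2
      have : δ' < δ' := lt_of_lt_of_le (hlt1.trans hδseqlt) (min_le_left _ _)
      exact lt_irrefl _ this
    apply AEEqFun.ext
    filter_upwards [AEEqFun.coeFn_mul
        (AEEqFun.mk (S.indicator fun _ => (1 : ℂ))
          (aestronglyMeasurable_const.indicator hSmeas)) (D f),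
      AEEqFun.coeFn_mk (S.indicator fun _ => (1 : ℂ))
        (aestronglyMeasurable_const.indicator hSmeas),
      measure_eq_zero_iff_ae_notMem.mp hδ'] with ω k1 k2 k3
    rw [k1, Pi.mul_apply, k2]
    by_cases hωS : ω ∈ S
    · rw [Set.indicator_of_mem hωS, one_mul]
    · rw [Set.indicator_of_notMem hωS, zero_mul]
      have : ¬ ((D f) ω ≠ 0) := fun hne => k3 ⟨hne, hωS⟩
      rw [not_not.mp this]
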